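/- The function Ĩ : P([0,1]) → [0,∞] defined by Ĩ(μ) = lim_{n→∞} −ln[4^{n−1}(c_n^+(μ) − c_n^-(μ))], where c_n^+(μ) = c^+(c^{(n−1)}(μ)) and c_n^-(μ) = c^-(c^{(n−1)}(μ)) (the limit existing in [0,∞] since the sequence is nondecreasing in n), is convex: for all μ_1, μ_2 ∈ P([0,1]) and α, β > 0 with α + β = 1, Ĩ(αμ_1 + βμ_2) ≤ αĨ(μ_1) + βĨ(μ_2). Moreover, c_n^+(αμ_1 + βμ_2) − c_n^-(αμ_1 + βμ_2) ≥ α(c_n^+(μ_1) − c_n^-(μ_1)) + β(c_n^+(μ_2) − c_n^-(μ_2)) for every n. -/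

import Mathlib

open MeasureTheory Filter Topology Matrix ProbabilityTheory
open scoped ENNReal NNReal Classical

noncomputable section

/-- The unit interval `[0,1]` as a subtype of `ℝ`. -/
abbrev I01 : Type := (Set.Icc (0:ℝ) 1)

/-- `c_k(μ)`, the `k`-th power moment of a probability measure on `[0,1]`. -/
def momentP (μ : ProbabilityMeasure I01) (k : ℕ) : ℝ := ∫ x, (x : ℝ) ^ k ∂(μ : Measure I01)

/-- `c^{(n)}(μ) = (c_1(μ),…,c_n(μ))`, the vector of the first `n` moments. -/
def momVec (n : ℕ) (μ : ProbabilityMeasure I01) : Fin n → ℝ := fun i => momentP μ ((i : ℕ) + 1)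

/-- The `n`-th moment space `M_n ⊆ ℝ^n`. -/
def Mset (n : ℕ) : Set (Fin n → ℝ) := Set.range (momVec n)

/-- `P_n`, the uniform (normalized Lebesgue) probability on `M_n`. -/
def Pn (n : ℕ) : Measure (Fin n → ℝ) := (volume (Mset n))⁻¹ • volume.restrict (Mset n)

/-- `c^+(c) = max {t : (c,t) ∈ M_{k+1}}`. -/
def cplus {k : ℕ} (c : Fin k → ℝ) : ℝ := sSup {t : ℝ | Fin.snoc c t ∈ Mset (k + 1)}

/-- `c^-(c) = min {t : (c,t) ∈ M_{k+1}}`. -/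
def cminus {k : ℕ} (c : Fin k → ℝ) : ℝ := sInf {t : ℝ | Fin.snoc c t ∈ Mset (k + 1)}

/-- The arcsine law `ν(dx) = dx / (π √(x(1-x)))` on `[0,1]`. -/
def arcsine : Measure I01 :=
  volume.withDensity fun x => ENNReal.ofReal (1 / (Real.pi * Real.sqrt ((x:ℝ) * (1 - (x:ℝ)))))

/-- `σ_n^+(d)`: the unique probability measure with first `n` moments `d` and maximal
`(n+1)`-th moment (junk value if `d ∉ M_n`). -/
def sigmaPlus (n : ℕ) (d : Fin n → ℝ) : ProbabilityMeasure I01 :=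
  if h : ∃ μ : ProbabilityMeasure I01, momVec n μ = d ∧ momentP μ (n + 1) = cplus d then h.choose
  else ⟨Measure.dirac ⟨0, Set.left_mem_Icc.mpr zero_le_one⟩, inferInstance⟩

/-- Kullback information `K(P,Q) = ∫ log (dP/dQ) dP` if `P ≪ Q` and `log dP/dQ ∈ L¹(P)`,
`+∞` otherwise (valued in `[0,∞]`; for probability measures the integral is nonnegative). -/
def kullback (P Q : Measure I01) : ℝ≥0∞ :=
  if P ≪ Q ∧ Integrable (llr P Q) P then ENNReal.ofReal (∫ x, llr P Q x ∂P) else ⊤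

/-- A sequence of (outer) measures `R n` satisfies the LDP with speed `u` and rate `I`. -/
def IsLDP {U : Type*} [TopologicalSpace U] (R : ℕ → Set U → ℝ≥0∞) (u : ℕ → ℝ) (I : U → EReal) :
    Prop :=
  LowerSemicontinuous I ∧
  ∀ A : Set U,
    -(⨅ x ∈ interior A, I x) ≤ liminf (fun n => ((u n : ℝ) : EReal) * ENNReal.log (R n A)) atTop ∧
    limsup (fun n => ((u n : ℝ) : EReal) * ENNReal.log (R n A)) atTop ≤ -(⨅ x ∈ closure A, I x)

/-- Goodness of a rate function: all sublevel sets are compact. -/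
def GoodRate {U : Type*} [TopologicalSpace U] (I : U → EReal) : Prop :=
  ∀ a : ℝ, IsCompact {x : U | I x ≤ (a : EReal)}

/-- Convexity of a rate function on `P([0,1])`, via convex combinations of measures. -/
def ConvexRateProb (I : ProbabilityMeasure I01 → EReal) : Prop :=
  ∀ (μ μ₁ μ₂ : ProbabilityMeasure I01) (a b : ℝ), 0 ≤ a → 0 ≤ b → a + b = 1 →
    (μ : Measure I01) = ENNReal.ofReal a • (μ₁ : Measure I01) + ENNReal.ofReal b • (μ₂ : Measure I01) →
    I μ ≤ (a : EReal) * I μ₁ + (b : EReal) * I μ₂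

/-- Projection keeping the first `k` coordinates (junk `0` where undefined). -/
def projk (k n : ℕ) (c : Fin n → ℝ) : Fin k → ℝ :=
  fun i => if h : (i : ℕ) < n then c ⟨i, h⟩ else 0

/-- `c̄^{(k)}`: the vector of the first `k` moments of the arcsine law. -/
def cbar (k : ℕ) : Fin k → ℝ := fun i => ∫ x, (x : ℝ) ^ ((i : ℕ) + 1) ∂arcsine

/-- The lower-triangular matrix `A_k` with entries `a_{ij} = 2^{-2i+1} C(2i, i-j)`
(`1`-based indices). -/
def Amat (k : ℕ) : Matrix (Fin k) (Fin k) ℝ :=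
  fun i j => if (j : ℕ) ≤ (i : ℕ) then
    (2 : ℝ) ^ (-(2 * (i : ℕ) + 1) : ℤ) * (Nat.choose (2 * ((i : ℕ) + 1)) ((i : ℕ) - (j : ℕ)))
  else 0

/-- `Σ_k = (1/2) A_k A_kᵀ`. -/
def Sigmak (k : ℕ) : Matrix (Fin k) (Fin k) ℝ := (1 / 2 : ℝ) • (Amat k * (Amat k)ᵀ)

/-- `J_k(x) = (1/2) xᵀ Σ_k⁻¹ x`. -/
def Jk (k : ℕ) (x : Fin k → ℝ) : ℝ := (1 / 2 : ℝ) * (x ⬝ᵥ ((Sigmak k)⁻¹ *ᵥ x))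

/-- Unnormalized beta density `x^{a-1}(1-x)^{b-1}` (natural parameters). -/
def betaDen (a b : ℕ) (x : I01) : ℝ≥0∞ :=
  ENNReal.ofReal ((x : ℝ) ^ (a - 1) * (1 - (x : ℝ)) ^ (b - 1))

/-- The beta distribution `β(a,b)` on `[0,1]` with natural parameters. -/
def betaM (a b : ℕ) : Measure I01 :=
  (∫⁻ x, betaDen a b x ∂volume)⁻¹ • volume.withDensity (betaDen a b)

/-- `ln : ℝ → [-∞,∞]` with the convention `ln t = -∞` for `t ≤ 0`. -/
def elog (x : ℝ) : EReal := if x ≤ 0 then ⊥ else ((Real.log x : ℝ) : EReal)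

/-- `exp(-x)` for `x ∈ [0,∞]`, with `exp(-∞) = 0`. -/
def expNeg (x : ℝ≥0∞) : ℝ := if x = ⊤ then 0 else Real.exp (-(x.toReal))

/-- `exp : [-∞,∞] → [0,∞]`. -/
def expE (x : EReal) : ℝ≥0∞ :=
  if x = ⊥ then 0 else if x = ⊤ then ⊤ else ENNReal.ofReal (Real.exp x.toReal)

/-- The first `m` coordinates of `c : Fin n → ℝ` (`m ≤ n`). -/
def truncMom {n : ℕ} (c : Fin n → ℝ) (m : ℕ) (h : m ≤ n) : Fin m → ℝ :=
  fun j => c ⟨j, lt_of_lt_of_le j.2 h⟩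

/-- The vector of the first `k` canonical moments of `c` (junk outside `int M_n`). -/
def canMomVec (k : ℕ) {n : ℕ} (c : Fin n → ℝ) : Fin k → ℝ := fun i =>
  if h : (i : ℕ) < n then
    (c ⟨i, h⟩ - cminus (truncMom c i h.le)) /
      (cplus (truncMom c i h.le) - cminus (truncMom c i h.le))
  else 0

/-- `F(μ) = ∫ f₀ dμ`. -/
def F0int (f0 : C(I01, ℝ)) (μ : ProbabilityMeasure I01) : ℝ := ∫ x, f0 x ∂(μ : Measure I01)

/-- The tilted law `Q̃_n(B) = E[exp(nF(μ_n)) 1_B(μ_n)] / E[exp(nF(μ_n))]`, as a set function. -/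
def Qtil (f0 : C(I01, ℝ)) (n : ℕ) (B : Set (ProbabilityMeasure I01)) : ℝ≥0∞ :=
  (∫⁻ c, ENNReal.ofReal (Real.exp (n * F0int f0 (sigmaPlus n c))) ∂(Pn n))⁻¹ *
    ∫⁻ c in sigmaPlus n ⁻¹' B, ENNReal.ofReal (Real.exp (n * F0int f0 (sigmaPlus n c))) ∂(Pn n)

/-- `∫ ln g dν` valued in `[-∞,∞)`, with the convention `ln t = -∞` on `{t ≤ 0}`. -/
def nuLogInt (g : I01 → ℝ) : EReal :=
  ((∫⁻ x, ENNReal.ofReal (Real.log (g x)) ∂arcsine : ℝ≥0∞) : EReal) -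
    ((∫⁻ x, (if g x ≤ 0 then (⊤ : ℝ≥0∞) else ENNReal.ofReal (-Real.log (g x))) ∂arcsine :
      ℝ≥0∞) : EReal)

end

noncomputable section AuxStmt12
open MeasureTheory
open scoped ENNReal

lemma aux_integrable_pow (m : Measure I01) [IsFiniteMeasure m] (k : ℕ) :
    Integrable (fun x : I01 => (x : ℝ) ^ k) m := by
  refine (integrable_const (1 : ℝ)).mono'
    ((continuous_subtype_val.pow k).aestronglyMeasurable) ?_
  filter_upwards with x
  rw [Real.norm_eq_abs, abs_of_nonneg (pow_nonneg x.2.1 k)]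
  exact pow_le_one₀ x.2.1 x.2.2

lemma aux_momentP_nonneg (μ : ProbabilityMeasure I01) (k : ℕ) : 0 ≤ momentP μ k :=
  integral_nonneg fun x => pow_nonneg x.2.1 k

lemma aux_momentP_le_one (μ : ProbabilityMeasure I01) (k : ℕ) : momentP μ k ≤ 1 := by
  have h : momentP μ k ≤ ∫ _x, (1 : ℝ) ∂(μ : Measure I01) :=
    integral_mono (aux_integrable_pow _ k) (integrable_const 1)
      (fun x => pow_le_one₀ x.2.1 x.2.2)
  simpa using h

lemma aux_momentP_mix (μ μ₁ μ₂ : ProbabilityMeasure I01) (a b : ℝ) (ha : 0 ≤ a) (hb : 0 ≤ b)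
    (hmix : (μ : Measure I01) =
      ENNReal.ofReal a • (μ₁ : Measure I01) + ENNReal.ofReal b • (μ₂ : Measure I01)) (k : ℕ) :
    momentP μ k = a * momentP μ₁ k + b * momentP μ₂ k := by
  unfold momentP
  rw [hmix, integral_add_measure
      ((aux_integrable_pow _ k).smul_measure ENNReal.ofReal_ne_top)
      ((aux_integrable_pow _ k).smul_measure ENNReal.ofReal_ne_top),
    integral_smul_measure, integral_smul_measure,
    ENNReal.toReal_ofReal ha, ENNReal.toReal_ofReal hb, smul_eq_mul, smul_eq_mul]

lemma aux_momVec_succ (n : ℕ) (ν : ProbabilityMeasure I01) :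
    momVec (n + 1) ν = Fin.snoc (momVec n ν) (momentP ν (n + 1)) := by
  funext i
  refine Fin.lastCases ?_ (fun j => ?_) i
  · simp [momVec, Fin.snoc_last]
  · simp [momVec, Fin.snoc_castSucc]

/-- The section set whose sup is `cplus` and inf is `cminus`. -/
def Sset {k : ℕ} (c : Fin k → ℝ) : Set ℝ := {t : ℝ | Fin.snoc c t ∈ Mset (k + 1)}

lemma aux_cplus_eq {k : ℕ} (c : Fin k → ℝ) : cplus c = sSup (Sset c) := rfl
lemma aux_cminus_eq {k : ℕ} (c : Fin k → ℝ) : cminus c = sInf (Sset c) := rfl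

lemma aux_Sset_subset {k : ℕ} (c : Fin k → ℝ) : Sset c ⊆ Set.Icc (0 : ℝ) 1 := by
  rintro t ⟨ν, hν⟩
  have h1 : momVec (k + 1) ν (Fin.last k) = t := by
    rw [hν]; simp [Fin.snoc_last]
  have h2 : momVec (k + 1) ν (Fin.last k) = momentP ν (k + 1) := by
    simp [momVec]
  rw [← h1, h2]
  exact ⟨aux_momentP_nonneg ν _, aux_momentP_le_one ν _⟩

lemma aux_Sset_mem (k : ℕ) (ν : ProbabilityMeasure I01) :
    momentP ν (k + 1) ∈ Sset (momVec k ν) :=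
  ⟨ν, aux_momVec_succ k ν⟩

lemma aux_Sset_bddAbove {k : ℕ} (c : Fin k → ℝ) : BddAbove (Sset c) :=
  ⟨1, fun _ ht => (aux_Sset_subset c ht).2⟩

lemma aux_Sset_bddBelow {k : ℕ} (c : Fin k → ℝ) : BddBelow (Sset c) :=
  ⟨0, fun _ ht => (aux_Sset_subset c ht).1⟩

lemma aux_Sset_mix {k : ℕ} {c₁ c₂ : Fin k → ℝ} {t₁ t₂ : ℝ} {a b : ℝ}
    (ha : 0 ≤ a) (hb : 0 ≤ b) (hab : a + b = 1)
    (h₁ : t₁ ∈ Sset c₁) (h₂ : t₂ ∈ Sset c₂) :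
    a * t₁ + b * t₂ ∈ Sset (fun i => a * c₁ i + b * c₂ i) := by
  obtain ⟨ν₁, hν₁⟩ := h₁
  obtain ⟨ν₂, hν₂⟩ := h₂
  set m : Measure I01 :=
    ENNReal.ofReal a • (ν₁ : Measure I01) + ENNReal.ofReal b • (ν₂ : Measure I01) with hm
  have hprob : IsProbabilityMeasure m := by
    constructor
    rw [hm]
    simp only [Measure.coe_add, Measure.coe_smul, Pi.add_apply, Pi.smul_apply,
      measure_univ, smul_eq_mul, mul_one]
    rw [← ENNReal.ofReal_add ha hb, hab, ENNReal.ofReal_one]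
  refine ⟨⟨m, hprob⟩, ?_⟩
  have hmom : ∀ j : ℕ, momentP (⟨m, hprob⟩ : ProbabilityMeasure I01) j
      = a * momentP ν₁ j + b * momentP ν₂ j :=
    fun j => aux_momentP_mix ⟨m, hprob⟩ ν₁ ν₂ a b ha hb hm j
  funext i
  refine Fin.lastCases ?_ (fun j => ?_) i
  · have e₁ : momVec (k + 1) ν₁ (Fin.last k) = t₁ := by rw [hν₁]; simp [Fin.snoc_last]
    have e₂ : momVec (k + 1) ν₂ (Fin.last k) = t₂ := by rw [hν₂]; simp [Fin.snoc_last]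
    simp only [momVec, Fin.val_last] at e₁ e₂ ⊢
    rw [Fin.snoc_last, hmom, e₁, e₂]
  · have e₁ : momVec (k + 1) ν₁ (Fin.castSucc j) = c₁ j := by rw [hν₁]; simp [Fin.snoc_castSucc]
    have e₂ : momVec (k + 1) ν₂ (Fin.castSucc j) = c₂ j := by rw [hν₂]; simp [Fin.snoc_castSucc]
    simp only [momVec, Fin.coe_castSucc] at e₁ e₂ ⊢
    rw [Fin.snoc_castSucc, hmom, e₁, e₂]

lemma aux_sup_superadd {S₁ S₂ S : Set ℝ} (hne₁ : S₁.Nonempty) (hne₂ : S₂.Nonempty)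
    (hbdd : BddAbove S) {a b : ℝ} (ha : 0 < a) (hb : 0 < b)
    (h : ∀ t₁ ∈ S₁, ∀ t₂ ∈ S₂, a * t₁ + b * t₂ ∈ S) :
    a * sSup S₁ + b * sSup S₂ ≤ sSup S := by
  have key : ∀ t₁ ∈ S₁, ∀ t₂ ∈ S₂, a * t₁ + b * t₂ ≤ sSup S :=
    fun t₁ h₁ t₂ h₂ => le_csSup hbdd (h t₁ h₁ t₂ h₂)
  have h1 : sSup S₁ ≤ (sSup S - b * sSup S₂) / a := by
    refine csSup_le hne₁ fun t₁ h₁ => ?_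
    rw [le_div_iff₀ ha]
    have h2 : sSup S₂ ≤ (sSup S - a * t₁) / b := by
      refine csSup_le hne₂ fun t₂ h₂ => ?_
      rw [le_div_iff₀ hb]
      linarith [key t₁ h₁ t₂ h₂]
    have h2' := (le_div_iff₀ hb).1 h2
    linarith
  have h1' := (le_div_iff₀ ha).1 h1
  linarith

lemma aux_inf_subadd {S₁ S₂ S : Set ℝ} (hne₁ : S₁.Nonempty) (hne₂ : S₂.Nonempty)
    (hbdd : BddBelow S) {a b : ℝ} (ha : 0 < a) (hb : 0 < b)
    (h : ∀ t₁ ∈ S₁, ∀ t₂ ∈ S₂, a * t₁ + b * t₂ ∈ S) :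
    sInf S ≤ a * sInf S₁ + b * sInf S₂ := by
  have key : ∀ t₁ ∈ S₁, ∀ t₂ ∈ S₂, sInf S ≤ a * t₁ + b * t₂ :=
    fun t₁ h₁ t₂ h₂ => csInf_le hbdd (h t₁ h₁ t₂ h₂)
  have h1 : (sInf S - b * sInf S₂) / a ≤ sInf S₁ := by
    refine le_csInf hne₁ fun t₁ h₁ => ?_
    rw [div_le_iff₀ ha]
    have h2 : (sInf S - a * t₁) / b ≤ sInf S₂ := by
      refine le_csInf hne₂ fun t₂ h₂ => ?_
      rw [div_le_iff₀ hb]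
      linarith [key t₁ h₁ t₂ h₂]
    have h2' := (div_le_iff₀ hb).1 h2
    linarith
  have h1' := (div_le_iff₀ ha).1 h1
  linarith

lemma aux_momVec_mix (μ μ₁ μ₂ : ProbabilityMeasure I01) {a b : ℝ} (ha : 0 ≤ a) (hb : 0 ≤ b)
    (hmix : (μ : Measure I01) =
      ENNReal.ofReal a • (μ₁ : Measure I01) + ENNReal.ofReal b • (μ₂ : Measure I01)) (n : ℕ) :
    momVec n μ = fun i => a * momVec n μ₁ i + b * momVec n μ₂ i :=
  funext fun i => aux_momentP_mix μ μ₁ μ₂ a b ha hb hmix _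

lemma aux_delta_superadd (μ μ₁ μ₂ : ProbabilityMeasure I01) {a b : ℝ} (ha : 0 < a) (hb : 0 < b)
    (hab : a + b = 1)
    (hmix : (μ : Measure I01) =
      ENNReal.ofReal a • (μ₁ : Measure I01) + ENNReal.ofReal b • (μ₂ : Measure I01)) (m : ℕ) :
    a * (cplus (momVec m μ₁) - cminus (momVec m μ₁)) +
        b * (cplus (momVec m μ₂) - cminus (momVec m μ₂)) ≤
      cplus (momVec m μ) - cminus (momVec m μ) := by
  have hc := aux_momVec_mix μ μ₁ μ₂ ha.le hb.le hmix m
  have hne₁ : (Sset (momVec m μ₁)).Nonempty := ⟨_, aux_Sset_mem m μ₁⟩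
  have hne₂ : (Sset (momVec m μ₂)).Nonempty := ⟨_, aux_Sset_mem m μ₂⟩
  have hmem : ∀ t₁ ∈ Sset (momVec m μ₁), ∀ t₂ ∈ Sset (momVec m μ₂),
      a * t₁ + b * t₂ ∈ Sset (momVec m μ) := by
    intro t₁ h₁ t₂ h₂
    rw [hc]
    exact aux_Sset_mix ha.le hb.le hab h₁ h₂
  have hsup := aux_sup_superadd hne₁ hne₂ (aux_Sset_bddAbove (momVec m μ)) ha hb hmem
  have hinf := aux_inf_subadd hne₁ hne₂ (aux_Sset_bddBelow (momVec m μ)) ha hb hmem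
  rw [aux_cplus_eq, aux_cplus_eq, aux_cplus_eq, aux_cminus_eq, aux_cminus_eq, aux_cminus_eq]
  nlinarith [hsup, hinf]

lemma aux_delta_nonneg (m : ℕ) (ν : ProbabilityMeasure I01) :
    0 ≤ cplus (momVec m ν) - cminus (momVec m ν) := by
  rw [aux_cplus_eq, aux_cminus_eq, sub_nonneg]
  exact csInf_le_csSup ⟨_, aux_Sset_mem m ν⟩ (aux_Sset_bddBelow _) (aux_Sset_bddAbove _)

lemma aux_mul_neg_elog_ne_bot (a t : ℝ) (ha : 0 < a) : (a : EReal) * -(elog t) ≠ ⊥ := by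
  by_cases h : t ≤ 0
  · rw [elog, if_pos h, EReal.neg_bot, EReal.coe_mul_top_of_pos ha]
    simp
  · rw [elog, if_neg h, ← EReal.coe_neg, ← EReal.coe_mul]
    exact EReal.coe_ne_bot _

end AuxStmt12

section Statements
open MeasureTheory Filter Topology Matrix ProbabilityTheory
open scoped ENNReal NNReal

/-- The rate function `Ĩ` of (14) (a nondecreasing limit, here as a supremum). -/
noncomputable def Itilde (μ : ProbabilityMeasure I01) : EReal :=
  ⨆ m : ℕ, -(elog ((4 : ℝ) ^ m * (cplus (momVec m μ) - cminus (momVec m μ))))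

theorem stmt12 (μ μ₁ μ₂ : ProbabilityMeasure I01) (a b : ℝ) (ha : 0 < a) (hb : 0 < b)
    (hab : a + b = 1)
    (hmix : (μ : Measure I01) =
      ENNReal.ofReal a • (μ₁ : Measure I01) + ENNReal.ofReal b • (μ₂ : Measure I01)) :
    Itilde μ ≤ ((a : ℝ) : EReal) * Itilde μ₁ + ((b : ℝ) : EReal) * Itilde μ₂ ∧
    ∀ m : ℕ,
      a * (cplus (momVec m μ₁) - cminus (momVec m μ₁)) +
        b * (cplus (momVec m μ₂) - cminus (momVec m μ₂)) ≤
      cplus (momVec m μ) - cminus (momVec m μ) := by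
  have hdelta : ∀ m : ℕ,
      a * (cplus (momVec m μ₁) - cminus (momVec m μ₁)) +
        b * (cplus (momVec m μ₂) - cminus (momVec m μ₂)) ≤
      cplus (momVec m μ) - cminus (momVec m μ) :=
    fun m => aux_delta_superadd μ μ₁ μ₂ ha hb hab hmix m
  refine ⟨?_, hdelta⟩
  refine iSup_le fun m => ?_
  set Δ : ℝ := cplus (momVec m μ) - cminus (momVec m μ) with hD
  set Δ₁ : ℝ := cplus (momVec m μ₁) - cminus (momVec m μ₁) with hD1
  set Δ₂ : ℝ := cplus (momVec m μ₂) - cminus (momVec m μ₂) with hD2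
  have h1 : -(elog ((4 : ℝ) ^ m * Δ₁)) ≤ Itilde μ₁ :=
    le_iSup (fun n : ℕ => -(elog ((4 : ℝ) ^ n * (cplus (momVec n μ₁) - cminus (momVec n μ₁))))) m
  have h2 : -(elog ((4 : ℝ) ^ m * Δ₂)) ≤ Itilde μ₂ :=
    le_iSup (fun n : ℕ => -(elog ((4 : ℝ) ^ n * (cplus (momVec n μ₂) - cminus (momVec n μ₂))))) m
  have key : -(elog ((4 : ℝ) ^ m * Δ)) ≤
      (a : EReal) * -(elog ((4 : ℝ) ^ m * Δ₁)) + (b : EReal) * -(elog ((4 : ℝ) ^ m * Δ₂)) := by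
    have hΔ1 : 0 ≤ Δ₁ := aux_delta_nonneg m μ₁
    have hΔ2 : 0 ≤ Δ₂ := aux_delta_nonneg m μ₂
    have hmixΔ : a * Δ₁ + b * Δ₂ ≤ Δ := hdelta m
    rcases hΔ1.lt_or_eq with h1p | h1z
    · rcases hΔ2.lt_or_eq with h2p | h2z
      · have hΔp : 0 < Δ := lt_of_lt_of_le (by positivity) hmixΔ
        have hx : (0 : ℝ) < (4 : ℝ) ^ m * Δ₁ := by positivity
        have hy : (0 : ℝ) < (4 : ℝ) ^ m * Δ₂ := by positivity
        have hu : (0 : ℝ) < (4 : ℝ) ^ m * Δ := by positivity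
        rw [elog, elog, elog, if_neg (not_le.2 hu), if_neg (not_le.2 hx), if_neg (not_le.2 hy),
          ← EReal.coe_neg, ← EReal.coe_neg, ← EReal.coe_neg, ← EReal.coe_mul, ← EReal.coe_mul,
          ← EReal.coe_add, EReal.coe_le_coe_iff]
        have hconc := (strictConcaveOn_log_Ioi.concaveOn).2 (Set.mem_Ioi.2 hx) (Set.mem_Ioi.2 hy)
          ha.le hb.le hab
        simp only [smul_eq_mul] at hconc
        have hlog : Real.log (a * ((4:ℝ) ^ m * Δ₁) + b * ((4:ℝ) ^ m * Δ₂)) ≤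
            Real.log ((4:ℝ) ^ m * Δ) := by
          apply Real.log_le_log (by positivity)
          nlinarith [pow_pos (by norm_num : (0:ℝ) < 4) m]
        linarith [hconc, hlog]
      · have hbot : (b : EReal) * -(elog ((4 : ℝ) ^ m * Δ₂)) = ⊤ := by
          rw [← h2z, mul_zero, elog, if_pos le_rfl, EReal.neg_bot,
            EReal.coe_mul_top_of_pos hb]
        rw [hbot, EReal.add_top_of_ne_bot (aux_mul_neg_elog_ne_bot a _ ha)]
        exact le_top
    · have hbot : (a : EReal) * -(elog ((4 : ℝ) ^ m * Δ₁)) = ⊤ := by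
        rw [← h1z, mul_zero, elog, if_pos le_rfl, EReal.neg_bot,
          EReal.coe_mul_top_of_pos ha]
      rw [hbot, EReal.top_add_of_ne_bot (aux_mul_neg_elog_ne_bot b _ hb)]
      exact le_top
  refine key.trans (add_le_add (mul_le_mul_of_nonneg_left h1 ?_)
    (mul_le_mul_of_nonneg_left h2 ?_))
  · exact EReal.coe_nonneg.2 ha.le
  · exact EReal.coe_nonneg.2 hb.le

end Statements
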